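/- Let H be a weak Hopf algebra, A an algebra, and u ∈ Hom(H,A) an (e,f)-invertible element with f(H) ⊆ Z(A). Then h · (ab) = (h₁ · a)(h₂ · b) for all h ∈ H and a, b ∈ A, where h · a = u(h₁) a u⁻¹(h₂). -/

import Mathlib

open TensorProduct LinearMap

noncomputable section

section Defs

variable (k : Type*) [CommRing k]

/-- Convolution product on `Hom(C, A)`: `(φ * ψ)(c) = φ(c₁) ψ(c₂)`. -/
def conv {C A : Type*} [AddCommMonoid C] [Module k C] [Coalgebra k C]
    [Ring A] [Algebra k A] (φ ψ : C →ₗ[k] A) : C →ₗ[k] A :=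
  LinearMap.mul' k A ∘ₗ TensorProduct.map φ ψ ∘ₗ Coalgebra.comul

variable (H : Type*) [Ring H] [Algebra k H] [Coalgebra k H]

/-- The target counital map `ε_t(h) = ε(1₁ h) 1₂`. -/
def epsT : H →ₗ[k] H :=
  (TensorProduct.lid k H).toLinearMap ∘ₗ TensorProduct.map Coalgebra.counit LinearMap.id
    ∘ₗ LinearMap.mulLeft k (Coalgebra.comul (R := k) (1 : H))
    ∘ₗ (TensorProduct.mk k H H).flip 1

/-- The source counital map `ε_s(h) = 1₁ ε(h 1₂)`. -/
def epsS : H →ₗ[k] H :=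
  (TensorProduct.rid k H).toLinearMap ∘ₗ TensorProduct.map LinearMap.id Coalgebra.counit
    ∘ₗ LinearMap.mulRight k (Coalgebra.comul (R := k) (1 : H))
    ∘ₗ TensorProduct.mk k H H 1

/-- The axioms making the algebra-and-coalgebra `H` a weak Hopf algebra with
antipode `S`. -/
structure IsWeakHopf (S : H →ₗ[k] H) : Prop where
  comul_mul : ∀ g h : H,
    Coalgebra.comul (R := k) (g * h) = Coalgebra.comul (R := k) g * Coalgebra.comul (R := k) h
  comul_one_left :
    TensorProduct.map (Coalgebra.comul (R := k)) LinearMap.id (Coalgebra.comul (R := k) (1 : H)) =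
      (Coalgebra.comul (R := k) (1 : H) ⊗ₜ (1 : H)) *
        ((TensorProduct.assoc k H H H).symm ((1 : H) ⊗ₜ Coalgebra.comul (R := k) (1 : H)))
  comul_one_right :
    TensorProduct.map (Coalgebra.comul (R := k)) LinearMap.id (Coalgebra.comul (R := k) (1 : H)) =
      ((TensorProduct.assoc k H H H).symm ((1 : H) ⊗ₜ Coalgebra.comul (R := k) (1 : H))) *
        (Coalgebra.comul (R := k) (1 : H) ⊗ₜ (1 : H))
  counit_mul_left : ∀ h g l : H,
    Coalgebra.counit (R := k) (h * g * l) =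
      conv k (Coalgebra.counit ∘ₗ LinearMap.mulLeft k h)
        (Coalgebra.counit ∘ₗ LinearMap.mulRight k l) g
  counit_mul_right : ∀ h g l : H,
    Coalgebra.counit (R := k) (h * g * l) =
      conv k (Coalgebra.counit ∘ₗ LinearMap.mulRight k l)
        (Coalgebra.counit ∘ₗ LinearMap.mulLeft k h) g
  conv_id_antipode : conv k LinearMap.id S = epsT k H
  conv_antipode_id : conv k S LinearMap.id = epsS k H
  conv_antipode_id_antipode : conv k (conv k S LinearMap.id) S = S

/-- `smul3 u v a` is the linear map `h ↦ u(h₁) a v(h₂)` (Sweedler notation). -/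
def smul3 {A : Type*} [Ring A] [Algebra k A] (u v : H →ₗ[k] A) (a : A) : H →ₗ[k] A :=
  TensorProduct.lift ((LinearMap.mul k A ∘ₗ LinearMap.mulRight k a ∘ₗ u).compl₂ v)
    ∘ₗ Coalgebra.comul

/-- The bilinear map `t(g, h) = v(h₁) v(g₁) u(g₂ h₂)`, as a linear map on `H ⊗ H`. -/
def tmap {A : Type*} [Ring A] [Algebra k A] (u v : H →ₗ[k] A) : H ⊗[k] H →ₗ[k] A :=
  LinearMap.mul' k A ∘ₗ
    TensorProduct.map
      (LinearMap.mul' k A ∘ₗ TensorProduct.map v v ∘ₗ (TensorProduct.comm k H H).toLinearMap)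
      (u ∘ₗ LinearMap.mul' k H) ∘ₗ
    (TensorProduct.tensorTensorTensorComm k H H H H).toLinearMap ∘ₗ
    TensorProduct.map Coalgebra.comul Coalgebra.comul

end Defs


section Aux

variable {k : Type*} [CommRing k] {H : Type*} [Ring H] [Algebra k H] [Coalgebra k H]
  {A : Type*} [Ring A] [Algebra k A]

lemma conv_mulRight (φ ψ : H →ₗ[k] A) (c : A) :
    conv k φ (LinearMap.mulRight k c ∘ₗ ψ) = LinearMap.mulRight k c ∘ₗ conv k φ ψ := by
  ext h
  simp only [conv, comp_apply]
  induction Coalgebra.comul (R := k) h using TensorProduct.induction_on with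
  | zero => simp
  | tmul x y => simp [mul_assoc]
  | add x y hx hy => simp [map_add, hx, hy]

lemma conv_mulLeft (φ ψ : H →ₗ[k] A) (c : A) :
    conv k (LinearMap.mulLeft k c ∘ₗ φ) ψ = LinearMap.mulLeft k c ∘ₗ conv k φ ψ := by
  ext h
  simp only [conv, comp_apply]
  induction Coalgebra.comul (R := k) h using TensorProduct.induction_on with
  | zero => simp
  | tmul x y => simp [mul_assoc]
  | add x y hx hy => simp [map_add, hx, hy]

lemma conv_mulLeft_right (φ ψ : H →ₗ[k] A) (c : A) :
    conv k φ (LinearMap.mulLeft k c ∘ₗ ψ) = conv k (LinearMap.mulRight k c ∘ₗ φ) ψ := by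
  ext h
  simp only [conv, comp_apply]
  induction Coalgebra.comul (R := k) h using TensorProduct.induction_on with
  | zero => simp
  | tmul x y => simp [mul_assoc]
  | add x y hx hy => simp [map_add, hx, hy]

lemma map_comp_left_apply (X : H ⊗[k] H →ₗ[k] A) (χ : H →ₗ[k] A) (w : H ⊗[k] H) :
    TensorProduct.map (X ∘ₗ Coalgebra.comul) χ w =
      TensorProduct.map X χ ((Coalgebra.comul (R := k)).rTensor H w) := by
  induction w using TensorProduct.induction_on with
  | zero => simp
  | tmul x y => simp
  | add x y hx hy => rw [map_add, map_add, map_add, hx, hy]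

lemma map_comp_right_apply (φ : H →ₗ[k] A) (X : H ⊗[k] H →ₗ[k] A) (w : H ⊗[k] H) :
    TensorProduct.map φ (X ∘ₗ Coalgebra.comul) w =
      TensorProduct.map φ X ((Coalgebra.comul (R := k)).lTensor H w) := by
  induction w using TensorProduct.induction_on with
  | zero => simp
  | tmul x y => simp
  | add x y hx hy => rw [map_add, map_add, map_add, hx, hy]

lemma conv_assoc (φ ψ χ : H →ₗ[k] A) :
    conv k (conv k φ ψ) χ = conv k φ (conv k ψ χ) := by
  have key : LinearMap.mul' k A ∘ₗ
        TensorProduct.map (LinearMap.mul' k A ∘ₗ TensorProduct.map φ ψ) χ =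
      (LinearMap.mul' k A ∘ₗ
        TensorProduct.map φ (LinearMap.mul' k A ∘ₗ TensorProduct.map ψ χ)) ∘ₗ
        (TensorProduct.assoc k H H H).toLinearMap :=
    TensorProduct.ext_threefold fun x y z => by simp [mul_assoc]
  ext h
  simp only [conv, comp_apply]
  have l1 : TensorProduct.map (LinearMap.mul' k A ∘ₗ TensorProduct.map φ ψ ∘ₗ Coalgebra.comul) χ
      (Coalgebra.comul (R := k) h) =
      TensorProduct.map (LinearMap.mul' k A ∘ₗ TensorProduct.map φ ψ) χ
        ((Coalgebra.comul (R := k)).rTensor H (Coalgebra.comul h)) := by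
    rw [← LinearMap.comp_assoc]
    exact map_comp_left_apply _ _ _
  have l2 : TensorProduct.map φ (LinearMap.mul' k A ∘ₗ TensorProduct.map ψ χ ∘ₗ Coalgebra.comul)
      (Coalgebra.comul (R := k) h) =
      TensorProduct.map φ (LinearMap.mul' k A ∘ₗ TensorProduct.map ψ χ)
        ((Coalgebra.comul (R := k)).lTensor H (Coalgebra.comul h)) := by
    rw [← LinearMap.comp_assoc]
    exact map_comp_right_apply _ _ _
  rw [l1, l2, ← Coalgebra.coassoc_apply, ← comp_apply (LinearMap.mul' k A), key]
  simp

lemma smul3_eq_conv (u v : H →ₗ[k] A) (c : A) :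
    smul3 k H u v c = conv k (LinearMap.mulRight k c ∘ₗ u) v := by
  ext h
  simp only [smul3, conv, comp_apply]
  induction Coalgebra.comul (R := k) h using TensorProduct.induction_on with
  | zero => simp
  | tmul x y => simp
  | add x y hx hy => simp [map_add, hx, hy]

end Aux

section Statement

variable (k : Type*) [Field k] (H : Type*) [Ring H] [Algebra k H] [Coalgebra k H]
  [FiniteDimensional k H] (A : Type*) [Ring A] [Algebra k A]

/-- Corollary 3.7: if `u ∈ Hom(H,A)` is `(e,f)`-invertible and `f(H) ⊆ Z(A)`, then
`h · (ab) = (h₁ · a)(h₂ · b)` for all `h, a, b`, where `h · a = u(h₁) a u⁻¹(h₂)`. -/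
theorem smul_mul_of_f_central (S : H →ₗ[k] H) (hH : IsWeakHopf k H S)
    (e f u v : H →ₗ[k] A)
    (he : conv k e e = e) (hf : conv k f f = f)
    (huv : conv k u v = e) (hvu : conv k v u = f)
    (huf : conv k u f = u) (hfv : conv k f v = v)
    (hfcentral : ∀ h : H, f h ∈ Set.center A) :
    ∀ (h : H) (a b : A),
      smul3 k H u v (a * b) h = conv k (smul3 k H u v a) (smul3 k H u v b) h := by
  have main : ∀ a b : A,
      smul3 k H u v (a * b) = conv k (smul3 k H u v a) (smul3 k H u v b) := by
    intro a b
    have hcomm : LinearMap.mulRight k b ∘ₗ f = LinearMap.mulLeft k b ∘ₗ f := by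
      ext h
      simpa using ((Set.mem_center_iff.mp (hfcentral h)).comm b).eq
    calc smul3 k H u v (a * b)
        = conv k (LinearMap.mulRight k (a * b) ∘ₗ u) v := smul3_eq_conv u v (a * b)
      _ = conv k (LinearMap.mulRight k b ∘ₗ (LinearMap.mulRight k a ∘ₗ u)) v := by
          rw [LinearMap.mulRight_mul, LinearMap.comp_assoc]
      _ = conv k (LinearMap.mulRight k a ∘ₗ u) (LinearMap.mulLeft k b ∘ₗ v) := by
          rw [conv_mulLeft_right]
      _ = conv k (LinearMap.mulRight k a ∘ₗ u) (LinearMap.mulLeft k b ∘ₗ conv k f v) := by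
          rw [hfv]
      _ = conv k (LinearMap.mulRight k a ∘ₗ u) (conv k (LinearMap.mulLeft k b ∘ₗ f) v) := by
          rw [conv_mulLeft]
      _ = conv k (LinearMap.mulRight k a ∘ₗ u) (conv k (LinearMap.mulRight k b ∘ₗ f) v) := by
          rw [hcomm]
      _ = conv k (LinearMap.mulRight k a ∘ₗ u)
            (conv k (LinearMap.mulRight k b ∘ₗ conv k v u) v) := by rw [hvu]
      _ = conv k (LinearMap.mulRight k a ∘ₗ u)
            (conv k (conv k v (LinearMap.mulRight k b ∘ₗ u)) v) := by rw [conv_mulRight]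
      _ = conv k (LinearMap.mulRight k a ∘ₗ u)
            (conv k v (conv k (LinearMap.mulRight k b ∘ₗ u) v)) := by rw [conv_assoc]
      _ = conv k (conv k (LinearMap.mulRight k a ∘ₗ u) v)
            (conv k (LinearMap.mulRight k b ∘ₗ u) v) := by rw [conv_assoc]
      _ = conv k (smul3 k H u v a) (smul3 k H u v b) := by
          rw [smul3_eq_conv, smul3_eq_conv]
  intro h a b
  rw [main a b]


end Statement
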